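/- For distinct pairs (L_x, L_y) of lower unitriangular m×m matrices over GF(2), the matrices L_y P L_x^{-1} are pairwise distinct, where P is the binary Pascal matrix. In other words, the map (L_x, L_y) ↦ L_y P L_x^{-1} is injective on pairs of lower unitriangular matrices. -/
import Mathlib


open Matrix

/-- The binary Pascal matrix over GF(2): entries C(j-1, i-1) mod 2 (1-indexed),
i.e. C(j, i) with 0-indexed `Fin`. -/
def pascal (m : ℕ) : Matrix (Fin m) (Fin m) (ZMod 2) :=
  fun i j => (Nat.choose j.val i.val : ZMod 2)

/-- The anti-diagonal matrix over GF(2), with ones on the anti-diagonal. -/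
def antiDiag (m : ℕ) : Matrix (Fin m) (Fin m) (ZMod 2) :=
  fun i j => if i.val + j.val + 1 = m then 1 else 0
/-- Lower unitriangular matrix over GF(2). -/
def IsLowerUni {m : ℕ} (L : Matrix (Fin m) (Fin m) (ZMod 2)) : Prop :=
  (∀ i, L i i = 1) ∧ ∀ i j : Fin m, i < j → L i j = 0

/-- Upper unitriangular matrix over GF(2). -/
def IsUpperUni {m : ℕ} (U : Matrix (Fin m) (Fin m) (ZMod 2)) : Prop :=
  (∀ i, U i i = 1) ∧ ∀ i j : Fin m, j < i → U i j = 0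

section Aux

open Polynomial Finset

variable {m : ℕ}

lemma antiDiag_mul_apply (M : Matrix (Fin m) (Fin m) (ZMod 2)) (i j : Fin m) :
    (antiDiag m * M) i j = M i.rev j := by
  rw [Matrix.mul_apply]
  have hc : ∀ k : Fin m, antiDiag m i k * M k j = if k = i.rev then M k j else 0 := by
    intro k
    have : (i.val + k.val + 1 = m) ↔ k = i.rev := by
      rw [Fin.ext_iff, Fin.val_rev]
      omega
    simp [antiDiag, this, ite_mul]
  rw [Finset.sum_congr rfl (fun k _ => hc k),
    Finset.sum_ite_eq' Finset.univ i.rev (fun k => M k j)]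
  simp

lemma mul_antiDiag_apply (M : Matrix (Fin m) (Fin m) (ZMod 2)) (i j : Fin m) :
    (M * antiDiag m) i j = M i j.rev := by
  rw [Matrix.mul_apply]
  have hc : ∀ k : Fin m, M i k * antiDiag m k j = if k = j.rev then M i k else 0 := by
    intro k
    have : (k.val + j.val + 1 = m) ↔ k = j.rev := by
      rw [Fin.ext_iff, Fin.val_rev]
      omega
    simp [antiDiag, this, mul_ite]
  rw [Finset.sum_congr rfl (fun k _ => hc k),
    Finset.sum_ite_eq' Finset.univ j.rev (fun k => M i k)]
  simp

lemma antiDiag_mul_antiDiag : antiDiag m * antiDiag m = 1 := by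
  ext i j
  rw [antiDiag_mul_apply]
  have : (m - (i.val + 1) + j.val + 1 = m) ↔ i = j := by
    rw [Fin.ext_iff]
    omega
  simp [antiDiag, this, Matrix.one_apply]

lemma antiDiag_conj_conj (M : Matrix (Fin m) (Fin m) (ZMod 2)) :
    antiDiag m * (antiDiag m * M * antiDiag m) * antiDiag m = M := by
  calc antiDiag m * (antiDiag m * M * antiDiag m) * antiDiag m
      = (antiDiag m * antiDiag m) * M * (antiDiag m * antiDiag m) := by
        simp only [Matrix.mul_assoc]
    _ = M := by rw [antiDiag_mul_antiDiag]; simp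

lemma IsLowerUni.mul {A B : Matrix (Fin m) (Fin m) (ZMod 2)} (hA : IsLowerUni A)
    (hB : IsLowerUni B) : IsLowerUni (A * B) := by
  constructor
  · intro i
    rw [Matrix.mul_apply, Finset.sum_eq_single i]
    · rw [hA.1, hB.1, one_mul]
    · intro k _ hk
      rcases lt_or_gt_of_ne hk with h | h
      · rw [hB.2 k i h, mul_zero]
      · rw [hA.2 i k h, zero_mul]
    · simp
  · intro i j hij
    rw [Matrix.mul_apply]
    apply Finset.sum_eq_zero
    intro k _
    rcases lt_or_ge i k with h | h
    · rw [hA.2 i k h, zero_mul]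
    · rw [hB.2 k j (lt_of_le_of_lt h hij), mul_zero]

lemma isLowerUni_one : IsLowerUni (1 : Matrix (Fin m) (Fin m) (ZMod 2)) :=
  ⟨fun i => Matrix.one_apply_eq i, fun _ _ hij => Matrix.one_apply_ne (ne_of_lt hij)⟩

lemma IsLowerUni.pow {A : Matrix (Fin m) (Fin m) (ZMod 2)} (hA : IsLowerUni A) (n : ℕ) :
    IsLowerUni (A ^ n) := by
  induction n with
  | zero => simpa using isLowerUni_one
  | succ n ih => rw [pow_succ]; exact ih.mul hA

lemma IsLowerUni.det {A : Matrix (Fin m) (Fin m) (ZMod 2)} (hA : IsLowerUni A) :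
    A.det = 1 := by
  rw [Matrix.det_of_lowerTriangular A (fun i j hij => hA.2 i j (by simpa using hij))]
  simp [hA.1]

lemma IsLowerUni.isUnitDet {A : Matrix (Fin m) (Fin m) (ZMod 2)} (hA : IsLowerUni A) :
    IsUnit A.det := by rw [hA.det]; exact isUnit_one

lemma IsLowerUni.inv {A : Matrix (Fin m) (Fin m) (ZMod 2)} (hA : IsLowerUni A) :
    IsLowerUni A⁻¹ := by
  obtain ⟨u, hu⟩ := (Matrix.isUnit_iff_isUnit_det A).2 hA.isUnitDet
  have hpos : 0 < orderOf u := orderOf_pos u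
  have hord : A ^ (orderOf u) = 1 := by
    rw [← hu, ← Units.val_pow_eq_pow_val, pow_orderOf_eq_one, Units.val_one]
  have h1 : A * A ^ (orderOf u - 1) = 1 := by
    rw [← pow_succ', Nat.sub_add_cancel hpos, hord]
  rw [Matrix.inv_eq_right_inv h1]
  exact hA.pow _

lemma IsUpperUni.transpose_lower {A : Matrix (Fin m) (Fin m) (ZMod 2)} (hA : IsUpperUni A) :
    IsLowerUni Aᵀ := ⟨fun i => hA.1 i, fun i j hij => hA.2 j i hij⟩

lemma IsUpperUni.mul {A B : Matrix (Fin m) (Fin m) (ZMod 2)} (hA : IsUpperUni A)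
    (hB : IsUpperUni B) : IsUpperUni (A * B) := by
  have := hB.transpose_lower.mul hA.transpose_lower
  rw [← Matrix.transpose_mul] at this
  exact ⟨fun i => this.1 i, fun i j hij => this.2 j i hij⟩

lemma IsUpperUni.isUnitDet {A : Matrix (Fin m) (Fin m) (ZMod 2)} (hA : IsUpperUni A) :
    IsUnit A.det := by rw [← Matrix.det_transpose]; exact hA.transpose_lower.isUnitDet

lemma IsUpperUni.inv {A : Matrix (Fin m) (Fin m) (ZMod 2)} (hA : IsUpperUni A) :
    IsUpperUni A⁻¹ := by
  have h2 : IsLowerUni (Aᵀ)⁻¹ := hA.transpose_lower.inv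
  rw [← Matrix.transpose_nonsing_inv] at h2
  exact ⟨fun i => h2.1 i, fun i j hij => h2.2 j i hij⟩

lemma eq_one_of_lower_upper {A : Matrix (Fin m) (Fin m) (ZMod 2)} (hL : IsLowerUni A)
    (hU : IsUpperUni A) : A = 1 := by
  ext i j
  rcases lt_trichotomy i j with h | h | h
  · rw [hL.2 i j h, Matrix.one_apply_ne (ne_of_lt h)]
  · subst h; rw [hL.1, Matrix.one_apply_eq]
  · rw [hU.2 i j h, Matrix.one_apply_ne (ne_of_gt h)]

lemma IsLowerUni.conj {B : Matrix (Fin m) (Fin m) (ZMod 2)} (hB : IsLowerUni B) :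
    IsUpperUni (antiDiag m * B * antiDiag m) := by
  constructor
  · intro i
    rw [mul_antiDiag_apply, antiDiag_mul_apply]
    exact hB.1 i.rev
  · intro i j hij
    rw [mul_antiDiag_apply, antiDiag_mul_apply]
    apply hB.2
    rw [Fin.lt_def, Fin.val_rev, Fin.val_rev]
    have := i.isLt
    have := j.isLt
    rw [Fin.lt_def] at hij
    omega

lemma IsUpperUni.conj {B : Matrix (Fin m) (Fin m) (ZMod 2)} (hB : IsUpperUni B) :
    IsLowerUni (antiDiag m * B * antiDiag m) := by
  constructor
  · intro i
    rw [mul_antiDiag_apply, antiDiag_mul_apply]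
    exact hB.1 i.rev
  · intro i j hij
    rw [mul_antiDiag_apply, antiDiag_mul_apply]
    apply hB.2
    rw [Fin.lt_def, Fin.val_rev, Fin.val_rev]
    have := i.isLt
    have := j.isLt
    rw [Fin.lt_def] at hij
    omega

lemma pascal_isUpperUni : IsUpperUni (pascal m) := by
  constructor
  · intro i
    simp [pascal]
  · intro i j hij
    simp [pascal, Nat.choose_eq_zero_of_lt hij]

lemma sum_lemma (m i j : ℕ) (hi : i < m) (hj : j < m) :
    ∑ k ∈ Finset.range m, ((m-1-k).choose (m-1-i) : ZMod 2) * ((m-1-j).choose k : ZMod 2)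
      = (j.choose i : ZMod 2) := by
  have key : ∑ k ∈ Finset.range m,
      ((1 + X : Polynomial (ZMod 2)) ^ (m-1-k) * X ^ k * ((m-1-j).choose k : Polynomial (ZMod 2)))
      = (1 + X) ^ j := by
    rw [← Finset.sum_subset (Finset.range_subset_range.2 (show m - j ≤ m by omega))
      (fun k _ hk2 => ?_)]
    · have hmj : m - j = (m-1-j) + 1 := by omega
      rw [hmj]
      have hterm : ∀ k ∈ Finset.range ((m-1-j)+1),
          ((1 + X : Polynomial (ZMod 2)) ^ (m-1-k) * X ^ k *
            ((m-1-j).choose k : Polynomial (ZMod 2)))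
          = (1+X)^j * (X ^ k * (1+X) ^ ((m-1-j)-k) *
            ((m-1-j).choose k : Polynomial (ZMod 2))) := by
        intro k hk
        rw [Finset.mem_range] at hk
        have he : m - 1 - k = j + ((m-1-j) - k) := by omega
        rw [he, pow_add]
        ring
      rw [Finset.sum_congr rfl hterm, ← Finset.mul_sum, ← add_pow]
      have hone : (X + (1+X) : Polynomial (ZMod 2)) = 1 := by
        have h2 : (2 : Polynomial (ZMod 2)) = 0 := by
          rw [show (2 : Polynomial (ZMod 2)) = ((2:ℕ) : Polynomial (ZMod 2)) by norm_num,
            ← map_natCast (Polynomial.C : ZMod 2 →+* Polynomial (ZMod 2)),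
            show ((2:ℕ) : ZMod 2) = 0 by decide, map_zero]
        ring_nf
        rw [h2, mul_zero, add_zero]
      rw [hone, one_pow, mul_one]
    · have hk2' : m - j ≤ k := by
        by_contra hc
        exact hk2 (Finset.mem_range.2 (by omega))
      rw [Nat.choose_eq_zero_of_lt (show m-1-j < k by omega)]
      simp
  have hcoeff := congrArg (fun p => Polynomial.coeff p i) key
  simp only [Polynomial.finset_sum_coeff, Polynomial.coeff_one_add_X_pow] at hcoeff
  rw [← hcoeff]
  apply Finset.sum_congr rfl
  intro k hk
  rw [Finset.mem_range] at hk
  have hcast : ((m-1-j).choose k : Polynomial (ZMod 2))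
      = Polynomial.C ((m-1-j).choose k : ZMod 2) := by simp
  rw [hcast, Polynomial.coeff_mul_C, Polynomial.coeff_mul_X_pow']
  by_cases hki : k ≤ i
  · rw [if_pos hki, Polynomial.coeff_one_add_X_pow]
    have : (m-1-k).choose (i-k) = (m-1-k).choose (m-1-i) := by
      have h1 : (m-1-k) - (i-k) = m-1-i := by omega
      rw [← h1]
      exact (Nat.choose_symm (by omega)).symm
    rw [this]
  · rw [if_neg hki]
    have : (m-1-k).choose (m-1-i) = 0 := Nat.choose_eq_zero_of_lt (by omega)
    rw [this]
    simp

lemma pascal_key : antiDiag m * pascal m * antiDiag m * pascal m * antiDiag m = pascal m := by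
  ext i j
  rw [mul_antiDiag_apply, Matrix.mul_apply]
  have hc : ∀ k : Fin m, (antiDiag m * pascal m * antiDiag m) i k * pascal m k j.rev
      = ((m - 1 - k.val).choose (m - 1 - i.val) : ZMod 2) *
        ((m - 1 - j.val).choose k.val : ZMod 2) := by
    intro k
    rw [mul_antiDiag_apply, antiDiag_mul_apply]
    simp only [pascal, Fin.val_rev]
    rw [show m - (k.val + 1) = m - 1 - k.val by omega,
      show m - (i.val + 1) = m - 1 - i.val by omega,
      show m - (j.val + 1) = m - 1 - j.val by omega]
  rw [Finset.sum_congr rfl (fun k _ => hc k)]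
  rw [Fin.sum_univ_eq_sum_range
    (fun k => ((m - 1 - k).choose (m - 1 - i.val) : ZMod 2) *
      ((m - 1 - j.val).choose k : ZMod 2))]
  exact sum_lemma m i.val j.val i.isLt j.isLt

end Aux

/-- The map `(L_x, L_y) ↦ L_y P L_x⁻¹` is injective on pairs of lower
unitriangular matrices over GF(2). -/
theorem characteristic_injective (m : ℕ)
    (Lx Ly Lx' Ly' : Matrix (Fin m) (Fin m) (ZMod 2))
    (hLx : IsLowerUni Lx) (hLy : IsLowerUni Ly)
    (hLx' : IsLowerUni Lx') (hLy' : IsLowerUni Ly')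
    (h : Ly * pascal m * Lx⁻¹ = Ly' * pascal m * Lx'⁻¹) :
    Lx = Lx' ∧ Ly = Ly' := by
  set J := antiDiag m with hJdef
  set P := pascal m with hPdef
  have hJJ : J * J = 1 := antiDiag_mul_antiDiag
  have hPu : IsUpperUni P := pascal_isUpperUni
  have hPdet : IsUnit P.det := hPu.isUnitDet
  have hkey : J * P * J * P * J = P := pascal_key
  -- P * J = J * P * J * P
  have hPJ : P * J = J * P * J * P := by
    calc P * J = (J * P * J * P * J) * J := by rw [hkey]
    _ = J * P * J * P * (J * J) := by simp only [Matrix.mul_assoc]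
    _ = J * P * J * P := by rw [hJJ]; simp only [Matrix.mul_assoc]; rw [Matrix.mul_one]
  -- set up A, B
  set A := Ly'⁻¹ * Ly with hAdef
  set B := Lx'⁻¹ * Lx with hBdef
  have hAl : IsLowerUni A := hLy'.inv.mul hLy
  have hBl : IsLowerUni B := hLx'.inv.mul hLx
  have hAB : A * P = P * B := by
    have h1 : Ly * P = Ly' * P * Lx'⁻¹ * Lx := by
      calc Ly * P = Ly * P * Lx⁻¹ * Lx :=
        (Matrix.nonsing_inv_mul_cancel_right _ _ hLx.isUnitDet).symm
      _ = Ly' * P * Lx'⁻¹ * Lx := by rw [h]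
    calc A * P = Ly'⁻¹ * (Ly * P) := by rw [hAdef, Matrix.mul_assoc]
    _ = Ly'⁻¹ * (Ly' * (P * (Lx'⁻¹ * Lx))) := by rw [h1]; simp only [Matrix.mul_assoc]
    _ = P * B := by rw [Matrix.nonsing_inv_mul_cancel_left _ _ hLy'.isUnitDet, hBdef]
  -- conjugates
  set C := J * B * J with hCdef
  have hCu : IsUpperUni C := hBl.conj
  have hBC : B = J * C * J := by rw [hCdef]; rw [show J * (J * B * J) * J = B from antiDiag_conj_conj B]
  set A' := J * A * J with hA'def
  have hA'u : IsUpperUni A' := hAl.conj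
  have hPJ' : J * (P * (J * P)) = P * J := by
    simpa only [Matrix.mul_assoc] using hPJ.symm
  -- step: A' * (P * (J * P)) = (P * (J * P)) * C
  have s4 : A' * (P * (J * P)) = (P * (J * P)) * C := by
    have s2 : A * (P * J) = (P * J) * C := by
      calc A * (P * J) = (A * P) * J := (Matrix.mul_assoc A P J).symm
      _ = P * (J * C * J) * J := by rw [hAB, ← hBC]
      _ = (P * J) * C * (J * J) := by simp only [Matrix.mul_assoc]
      _ = (P * J) * C := by rw [hJJ, Matrix.mul_one]
    calc A' * (P * (J * P)) = J * (A * (J * (P * (J * P)))) := by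
          rw [hA'def]; simp only [Matrix.mul_assoc]
    _ = J * (A * (P * J)) := by rw [hPJ']
    _ = J * ((P * J) * C) := by rw [s2]
    _ = J * (J * P * J * P * C) := by rw [hPJ]
    _ = (J * J) * (P * (J * (P * C))) := by simp only [Matrix.mul_assoc]
    _ = (P * (J * P)) * C := by rw [hJJ, Matrix.one_mul]; simp only [Matrix.mul_assoc]
  -- U := P⁻¹ * A' * P
  set U := P⁻¹ * A' * P with hUdef
  have hUu : IsUpperUni U := (hPu.inv.mul hA'u).mul hPu
  have s5 : U * (J * P) = (J * P) * C := by
    calc U * (J * P) = P⁻¹ * (A' * (P * (J * P))) := by rw [hUdef]; simp only [Matrix.mul_assoc]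
    _ = P⁻¹ * (P * ((J * P) * C)) := by rw [s4]; simp only [Matrix.mul_assoc]
    _ = (J * P) * C := Matrix.nonsing_inv_mul_cancel_left _ _ hPdet
  set L := J * U * J with hLdef
  have hLl : IsLowerUni L := hUu.conj
  have s6 : L * P = P * C := by
    calc L * P = J * (U * (J * P)) := by rw [hLdef]; simp only [Matrix.mul_assoc]
    _ = J * ((J * P) * C) := by rw [s5]
    _ = (J * J) * (P * C) := by simp only [Matrix.mul_assoc]
    _ = P * C := by rw [hJJ, Matrix.one_mul]
  -- L is both lower and upper unitriangular
  have hL1 : L = 1 := by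
    have hLeq : L = P * C * P⁻¹ := by
      rw [← s6, Matrix.mul_nonsing_inv_cancel_right _ _ hPdet]
    exact eq_one_of_lower_upper hLl (hLeq ▸ (hPu.mul hCu).mul hPu.inv)
  have hC1 : C = 1 := by
    have : P * C = P := by rw [← s6, hL1, Matrix.one_mul]
    calc C = P⁻¹ * (P * C) := (Matrix.nonsing_inv_mul_cancel_left _ _ hPdet).symm
    _ = P⁻¹ * P := by rw [this]
    _ = 1 := Matrix.nonsing_inv_mul _ hPdet
  have hB1 : B = 1 := by rw [hBC, hC1, Matrix.mul_one, hJJ]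
  have hA1 : A = 1 := by
    have hAP : A * P = P := by rw [hAB, hB1, Matrix.mul_one]
    calc A = A * P * P⁻¹ := (Matrix.mul_nonsing_inv_cancel_right _ _ hPdet).symm
    _ = P * P⁻¹ := by rw [hAP]
    _ = 1 := Matrix.mul_nonsing_inv _ hPdet
  constructor
  · calc Lx = Lx' * (Lx'⁻¹ * Lx) :=
      (Matrix.mul_nonsing_inv_cancel_left _ _ hLx'.isUnitDet).symm
    _ = Lx' * 1 := by rw [← hBdef, hB1]
    _ = Lx' := Matrix.mul_one _
  · calc Ly = Ly' * (Ly'⁻¹ * Ly) :=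
      (Matrix.mul_nonsing_inv_cancel_left _ _ hLy'.isUnitDet).symm
    _ = Ly' * 1 := by rw [← hAdef, hA1]
    _ = Ly' := Matrix.mul_one _
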